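/- Let A be a gauge field on the cube B such that dA(p) = 0 for every plaquette p contained in B and (τ⁰A)(x) = 0 for every x ∈ B. Then A(b) = 0 for every bond b in B. -/

import Mathlib

open Finset

noncomputable section

/-- Points of the lattice `ℤ³`. -/
abbrev Pt : Type := Fin 3 → ℤ

/-- The standard unit vector `e_μ`. -/
def unitVec (μ : Fin 3) : Pt := fun i => if i = μ then 1 else 0

/-- Membership in the cube `B = {x : |x i| ≤ (L-1)/2}` (for odd `L`). -/
def inCube (L : ℤ) (x : Pt) : Prop := ∀ i, |x i| ≤ (L - 1) / 2

/-- Shift a point by `k` steps in direction `μ`. -/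
def shiftPt (z : Pt) (μ : Fin 3) (k : ℤ) : Pt := fun i => if i = μ then z i + k else z i

/-- The sum of the gauge field `A` along the straight lattice path from `z` to `z + t·e_μ`. -/
def seg (A : Pt → Pt → ℝ) (z : Pt) (μ : Fin 3) (t : ℤ) : ℝ :=
  if 0 ≤ t then ∑ j ∈ Finset.range t.toNat, A (shiftPt z μ (j : ℤ)) (shiftPt z μ ((j : ℤ) + 1))
  else ∑ j ∈ Finset.range (-t).toNat, A (shiftPt z μ (-(j : ℤ))) (shiftPt z μ (-(j : ℤ) - 1))

/-- The field strength `dA` on the plaquette based at `x`, spanned by `e_μ, e_ν`. -/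
def plaq (A : Pt → Pt → ℝ) (x : Pt) (μ ν : Fin 3) : ℝ :=
  A x (x + unitVec μ) + A (x + unitVec μ) (x + unitVec μ + unitVec ν)
    + A (x + unitVec μ + unitVec ν) (x + unitVec ν) + A (x + unitVec ν) x

/-- The corner of the rectilinear path `Γ^π_{yx}` reached after the first `m` coordinate
moves: coordinates `π 0, …, π (m-1)` are already at their final values. -/
def interPt (y x : Pt) (π : Equiv.Perm (Fin 3)) (m : ℕ) : Pt :=
  fun i => if ((π.symm i : Fin 3) : ℕ) < m then x i else y i

/-- `A(Γ^π_{yx})`: the sum of `A` along the rectilinear path from `y` to `x` which moves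
the coordinates to their final values in the order `π 0, π 1, π 2`. -/
def gammaSum (A : Pt → Pt → ℝ) (π : Equiv.Perm (Fin 3)) (y x : Pt) : ℝ :=
  ∑ m : Fin 3, seg A (interPt y x π (m : ℕ)) (π m) (x (π m) - y (π m))

/-- `(τ⁰A)(x) = A(Γ_{0x})`, for the identity ordering of coordinates. -/
def tau0 (A : Pt → Pt → ℝ) (x : Pt) : ℝ := gammaSum A 1 0 x

/-- `(τA)(x) = (1/6) Σ_π A(Γ^π_{0x})`, averaged over the `3! = 6` permutations. -/
def tau (A : Pt → Pt → ℝ) (x : Pt) : ℝ :=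
  (1 / 6) * ∑ π : Equiv.Perm (Fin 3), gammaSum A π 0 x

lemma seg_succ (A : Pt → Pt → ℝ) (hA : ∀ x x', A x x' = - A x' x) (z : Pt) (μ : Fin 3) (t : ℤ) :
    seg A z μ (t + 1) = seg A z μ t + A (shiftPt z μ t) (shiftPt z μ (t + 1)) := by
  rcases le_or_gt 0 t with ht | ht
  · have h1 : (0:ℤ) ≤ t + 1 := by linarith
    rw [seg, seg, if_pos h1, if_pos ht]
    have h2 : (t+1).toNat = t.toNat + 1 := by omega
    rw [h2, Finset.sum_range_succ]
    have h3 : ((t.toNat : ℤ)) = t := Int.toNat_of_nonneg ht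
    rw [h3]
  · have h1 : ¬ (0:ℤ) ≤ t := not_le.mpr ht
    have key : seg A z μ (t+1)
        = ∑ j ∈ Finset.range (-(t+1)).toNat, A (shiftPt z μ (-(j:ℤ))) (shiftPt z μ (-(j:ℤ) - 1)) := by
      rw [seg]; split_ifs with h
      · have h0 : t + 1 = 0 := by omega
        simp [h0]
      · rfl
    have hn : (-t).toNat = (-(t+1)).toNat + 1 := by omega
    have hsegt : seg A z μ t
        = ∑ j ∈ Finset.range (-t).toNat, A (shiftPt z μ (-(j:ℤ))) (shiftPt z μ (-(j:ℤ) - 1)) := by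
      rw [seg, if_neg h1]
    rw [key, hsegt, hn, Finset.sum_range_succ]
    have e1 : -(((-(t+1)).toNat : ℤ)) = t + 1 := by omega
    rw [e1]
    have e2 : t + 1 - 1 = t := by ring
    rw [e2, hA (shiftPt z μ (t+1)) (shiftPt z μ t)]
    ring

lemma tau0_expand (A : Pt → Pt → ℝ) (x : Pt) : tau0 A x =
    seg A (fun _ => 0) 0 (x 0)
    + seg A (fun i => if (i:ℕ) < 1 then x i else 0) 1 (x 1)
    + seg A (fun i => if (i:ℕ) < 2 then x i else 0) 2 (x 2) := by
  have h0 : interPt 0 x 1 0 = fun _ => 0 := by funext i; simp [interPt]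
  have h1 : interPt 0 x 1 1 = fun i : Fin 3 => if (i:ℕ) < 1 then x i else 0 := by
    funext i; simp [interPt, Equiv.Perm.one_symm]
  have h2 : interPt 0 x 1 2 = fun i : Fin 3 => if (i:ℕ) < 2 then x i else 0 := by
    funext i; simp [interPt, Equiv.Perm.one_symm]
  simp [tau0, gammaSum, Fin.sum_univ_three, h0, h1, h2]

lemma tau0_step2 (A : Pt → Pt → ℝ) (hA : ∀ x x', A x x' = - A x' x) (x : Pt) :
    tau0 A (x + unitVec 2) = tau0 A x + A x (x + unitVec 2) := by
  rw [tau0_expand, tau0_expand]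
  have e0 : (x + unitVec 2) 0 = x 0 := by simp [unitVec]
  have e1 : (x + unitVec 2) 1 = x 1 := by simp [unitVec]
  have e2 : (x + unitVec 2) 2 = x 2 + 1 := by simp [unitVec]
  have f1 : (fun i : Fin 3 => if (i:ℕ) < 1 then (x + unitVec 2) i else 0)
      = (fun i : Fin 3 => if (i:ℕ) < 1 then x i else 0) := by
    funext i; fin_cases i <;> simp [unitVec]
  have f2 : (fun i : Fin 3 => if (i:ℕ) < 2 then (x + unitVec 2) i else 0)
      = (fun i : Fin 3 => if (i:ℕ) < 2 then x i else 0) := by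
    funext i; fin_cases i <;> simp [unitVec]
  rw [e0, e1, e2, f1, f2]
  rw [seg_succ A hA _ 2 (x 2)]
  have g1 : shiftPt (fun i : Fin 3 => if (i:ℕ) < 2 then x i else 0) 2 (x 2) = x := by
    funext i; fin_cases i <;> simp [shiftPt]
  have g2 : shiftPt (fun i : Fin 3 => if (i:ℕ) < 2 then x i else 0) 2 (x 2 + 1)
      = x + unitVec 2 := by
    funext i; fin_cases i <;> simp [shiftPt, unitVec]
  rw [g1, g2]; ring

lemma tau0_step1 (A : Pt → Pt → ℝ) (hA : ∀ x x', A x x' = - A x' x) (x : Pt)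
    (h2 : x 2 = 0) :
    tau0 A (x + unitVec 1) = tau0 A x + A x (x + unitVec 1) := by
  rw [tau0_expand, tau0_expand]
  have e0 : (x + unitVec 1) 0 = x 0 := by simp [unitVec]
  have e1 : (x + unitVec 1) 1 = x 1 + 1 := by simp [unitVec]
  have e2 : (x + unitVec 1) 2 = x 2 := by simp [unitVec]
  have f1 : (fun i : Fin 3 => if (i:ℕ) < 1 then (x + unitVec 1) i else 0)
      = (fun i : Fin 3 => if (i:ℕ) < 1 then x i else 0) := by
    funext i; fin_cases i <;> simp [unitVec]
  rw [e0, e1, e2, f1]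
  rw [seg_succ A hA _ 1 (x 1)]
  have g1 : shiftPt (fun i : Fin 3 => if (i:ℕ) < 1 then x i else 0) 1 (x 1) = x := by
    funext i; fin_cases i <;> simp [shiftPt] <;> omega
  have g2 : shiftPt (fun i : Fin 3 => if (i:ℕ) < 1 then x i else 0) 1 (x 1 + 1)
      = x + unitVec 1 := by
    funext i; fin_cases i <;> simp [shiftPt, unitVec] <;> omega
  rw [g1, g2, h2]
  have s0 : ∀ z : Pt, seg A z 2 0 = 0 := by intro z; simp [seg]
  rw [s0, s0]; ring

lemma tau0_step0 (A : Pt → Pt → ℝ) (hA : ∀ x x', A x x' = - A x' x) (x : Pt)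
    (h1 : x 1 = 0) (h2 : x 2 = 0) :
    tau0 A (x + unitVec 0) = tau0 A x + A x (x + unitVec 0) := by
  rw [tau0_expand, tau0_expand]
  have e0 : (x + unitVec 0) 0 = x 0 + 1 := by simp [unitVec]
  have e1 : (x + unitVec 0) 1 = x 1 := by simp [unitVec]
  have e2 : (x + unitVec 0) 2 = x 2 := by simp [unitVec]
  rw [e0, e1, e2]
  rw [seg_succ A hA _ 0 (x 0)]
  have g1 : shiftPt (fun _ : Fin 3 => 0) 0 (x 0) = x := by
    funext i; fin_cases i <;> simp [shiftPt] <;> omega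
  have g2 : shiftPt (fun _ : Fin 3 => 0) 0 (x 0 + 1) = x + unitVec 0 := by
    funext i; fin_cases i <;> simp [shiftPt, unitVec] <;> omega
  rw [g1, g2, h1, h2]
  have s1 : ∀ z : Pt, seg A z 1 0 = 0 := by intro z; simp [seg]
  have s2 : ∀ z : Pt, seg A z 2 0 = 0 := by intro z; simp [seg]
  have f1 : (fun i : Fin 3 => if (i:ℕ) < 1 then (x + unitVec 0) i else 0)
      = (fun i : Fin 3 => if (i:ℕ) < 1 then x i else 0) + unitVec 0 := by
    funext i; fin_cases i <;> simp [unitVec]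
  rw [s1, s1, s2, s2]; ring

lemma cube_bounds {L : ℤ} {x : Pt} (h : inCube L x) (i : Fin 3) :
    -((L-1)/2) ≤ x i ∧ x i ≤ (L-1)/2 := abs_le.mp (h i)

lemma cube_of_bounds {L : ℤ} {x : Pt}
    (h : ∀ i : Fin 3, -((L-1)/2) ≤ x i ∧ x i ≤ (L-1)/2) : inCube L x :=
  fun i => abs_le.mpr (h i)

section main

variable {L : ℤ} {A : Pt → Pt → ℝ}
variable (hA : ∀ x x', A x x' = - A x' x)
variable (hdA : ∀ (x : Pt) (μ ν : Fin 3), μ ≠ ν →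
      inCube L x → inCube L (x + unitVec μ) → inCube L (x + unitVec ν) →
      inCube L (x + unitVec μ + unitVec ν) → plaq A x μ ν = 0)
variable (htau : ∀ x : Pt, inCube L x → tau0 A x = 0)

include hA htau in
lemma bond2 (x : Pt) (hx : inCube L x) (hx' : inCube L (x + unitVec 2)) :
    A x (x + unitVec 2) = 0 := by
  have h := tau0_step2 A hA x
  rw [htau x hx, htau _ hx'] at h; linarith

include hA htau in
lemma bond1base (x : Pt) (hx : inCube L x) (hx' : inCube L (x + unitVec 1))
    (h2 : x 2 = 0) : A x (x + unitVec 1) = 0 := by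
  have h := tau0_step1 A hA x h2
  rw [htau x hx, htau _ hx'] at h; linarith

include hA htau in
lemma bond0base (x : Pt) (hx : inCube L x) (hx' : inCube L (x + unitVec 0))
    (h1 : x 1 = 0) (h2 : x 2 = 0) : A x (x + unitVec 0) = 0 := by
  have h := tau0_step0 A hA x h1 h2
  rw [htau x hx, htau _ hx'] at h; linarith


include hA hdA htau in
lemma bond1gen : ∀ n : ℕ, ∀ x : Pt, inCube L x → inCube L (x + unitVec 1) →
    (x 2).natAbs ≤ n → A x (x + unitVec 1) = 0 := by
  intro n
  induction n with
  | zero =>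
    intro x hx hx' h
    exact bond1base hA htau x hx hx' (by omega)
  | succ n ih =>
    intro x hx hx' h
    rcases Nat.lt_or_ge (x 2).natAbs (n+1) with hlt | hge
    · exact ih x hx hx' (by omega)
    have habs : (x 2).natAbs = n + 1 := le_antisymm h hge
    have b0 := cube_bounds hx 0
    have b1 := cube_bounds hx 1
    have b2 := cube_bounds hx 2
    have c0 := cube_bounds hx' 0
    have c1 := cube_bounds hx' 1
    have c2 := cube_bounds hx' 2
    simp [unitVec] at c0 c1 c2
    rcases lt_or_ge 0 (x 2) with hpos | hneg
    · set y : Pt := fun i => if i = 2 then x i - 1 else x i with hy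
      have hye : y + unitVec 2 = x := by
        funext i; fin_cases i <;> simp [hy, unitVec]
      have hye1 : y + unitVec 1 + unitVec 2 = x + unitVec 1 := by
        funext i; fin_cases i <;> simp [hy, unitVec]
      have hcy : inCube L y := by
        apply cube_of_bounds; intro i; fin_cases i <;> simp [hy] <;> omega
      have hcy1 : inCube L (y + unitVec 1) := by
        apply cube_of_bounds; intro i; fin_cases i <;> simp [hy, unitVec] <;> omega
      have hplaq := hdA y 1 2 (by decide) hcy hcy1 (hye ▸ hx) (hye1 ▸ hx')
      rw [plaq, hye, hye1] at hplaq
      have t1 : A y (y + unitVec 1) = 0 := ih y hcy hcy1 (by simp [hy]; omega)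
      have t2 : A y (y + unitVec 2) = 0 := bond2 hA htau y hcy (hye ▸ hx)
      rw [hye] at t2
      have t3 : A x y = 0 := by rw [hA]; linarith
      have t4 : A (x + unitVec 1) x = - A x (x + unitVec 1) := by rw [hA]
      have t5 : A (y + unitVec 1) (y + unitVec 1 + unitVec 2) = 0 :=
        bond2 hA htau (y + unitVec 1) hcy1 (hye1 ▸ hx')
      rw [hye1] at t5
      linarith
    · have hneg' : x 2 < 0 := by omega
      set y : Pt := x + unitVec 2 with hy
      have hye1 : x + unitVec 1 + unitVec 2 = y + unitVec 1 := by
        rw [hy]; ring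
      have hcy : inCube L y := by
        apply cube_of_bounds; intro i; fin_cases i <;> simp [hy, unitVec] <;> omega
      have hcy1 : inCube L (y + unitVec 1) := by
        apply cube_of_bounds; intro i; fin_cases i <;> simp [hy, unitVec] <;> omega
      have hplaq := hdA x 1 2 (by decide) hx hx' hcy (hye1 ▸ hcy1)
      rw [plaq, hye1] at hplaq
      have t1 : A y (y + unitVec 1) = 0 := by
        apply ih y hcy hcy1; simp [hy, unitVec]; omega
      have t2 : A x y = 0 := bond2 hA htau x hx hcy
      have t3 : A (x + unitVec 1) (y + unitVec 1) = 0 := by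
        rw [← hye1]; exact bond2 hA htau (x + unitVec 1) hx' (hye1 ▸ hcy1)
      have t4 : A (y + unitVec 1) y = - A y (y + unitVec 1) := by rw [hA]
      have t5 : A y x = - A x y := by rw [hA]
      linarith

include hA hdA htau in
lemma bond1' (x : Pt) (hx : inCube L x) (hx' : inCube L (x + unitVec 1)) :
    A x (x + unitVec 1) = 0 :=
  bond1gen hA hdA htau (x 2).natAbs x hx hx' le_rfl


include hA hdA htau in
lemma bond0mid : ∀ n : ℕ, ∀ x : Pt, inCube L x → inCube L (x + unitVec 0) →
    x 2 = 0 → (x 1).natAbs ≤ n → A x (x + unitVec 0) = 0 := by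
  intro n
  induction n with
  | zero =>
    intro x hx hx' h2 h
    exact bond0base hA htau x hx hx' (by omega) h2
  | succ n ih =>
    intro x hx hx' h2 h
    rcases Nat.lt_or_ge (x 1).natAbs (n+1) with hlt | hge
    · exact ih x hx hx' h2 (by omega)
    have habs : (x 1).natAbs = n + 1 := le_antisymm h hge
    have b0 := cube_bounds hx 0
    have b1 := cube_bounds hx 1
    have b2 := cube_bounds hx 2
    have c0 := cube_bounds hx' 0
    have c1 := cube_bounds hx' 1
    have c2 := cube_bounds hx' 2
    simp [unitVec] at c0 c1 c2
    rcases lt_or_ge 0 (x 1) with hpos | hneg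
    · set y : Pt := fun i => if i = 1 then x i - 1 else x i with hy
      have hye : y + unitVec 1 = x := by
        funext i; fin_cases i <;> simp [hy, unitVec]
      have hye0 : y + unitVec 0 + unitVec 1 = x + unitVec 0 := by
        funext i; fin_cases i <;> simp [hy, unitVec]
      have hcy : inCube L y := by
        apply cube_of_bounds; intro i; fin_cases i <;> simp [hy] <;> omega
      have hcy0 : inCube L (y + unitVec 0) := by
        apply cube_of_bounds; intro i; fin_cases i <;> simp [hy, unitVec] <;> omega
      have hplaq := hdA y 0 1 (by decide) hcy hcy0 (hye ▸ hx) (hye0 ▸ hx')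
      rw [plaq, hye, hye0] at hplaq
      have t1 : A y (y + unitVec 0) = 0 := by
        apply ih y hcy hcy0 (by simp [hy]; omega) (by simp [hy]; omega)
      have t2 : A y (y + unitVec 1) = 0 := bond1' hA hdA htau y hcy (hye ▸ hx)
      rw [hye] at t2
      have t3 : A x y = 0 := by rw [hA]; linarith
      have t4 : A (x + unitVec 0) x = - A x (x + unitVec 0) := by rw [hA]
      have t5 : A (y + unitVec 0) (y + unitVec 0 + unitVec 1) = 0 :=
        bond1' hA hdA htau (y + unitVec 0) hcy0 (hye0 ▸ hx')
      rw [hye0] at t5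
      linarith
    · have hneg' : x 1 < 0 := by omega
      set y : Pt := x + unitVec 1 with hy
      have hye0 : x + unitVec 0 + unitVec 1 = y + unitVec 0 := by
        rw [hy]; ring
      have hcy : inCube L y := by
        apply cube_of_bounds; intro i; fin_cases i <;> simp [hy, unitVec] <;> omega
      have hcy0 : inCube L (y + unitVec 0) := by
        apply cube_of_bounds; intro i; fin_cases i <;> simp [hy, unitVec] <;> omega
      have hplaq := hdA x 0 1 (by decide) hx hx' hcy (hye0 ▸ hcy0)
      rw [plaq, hye0] at hplaq
      have t1 : A y (y + unitVec 0) = 0 := by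
        apply ih y hcy hcy0 (by simp [hy, unitVec]; omega) (by simp [hy, unitVec]; omega)
      have t2 : A x y = 0 := bond1' hA hdA htau x hx hcy
      have t3 : A (x + unitVec 0) (y + unitVec 0) = 0 := by
        rw [← hye0]; exact bond1' hA hdA htau (x + unitVec 0) hx' (hye0 ▸ hcy0)
      have t4 : A (y + unitVec 0) y = - A y (y + unitVec 0) := by rw [hA]
      have t5 : A y x = - A x y := by rw [hA]
      linarith

include hA hdA htau in
lemma bond0gen : ∀ n : ℕ, ∀ x : Pt, inCube L x → inCube L (x + unitVec 0) →
    (x 2).natAbs ≤ n → A x (x + unitVec 0) = 0 := by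
  intro n
  induction n with
  | zero =>
    intro x hx hx' h
    exact bond0mid hA hdA htau (x 1).natAbs x hx hx' (by omega) le_rfl
  | succ n ih =>
    intro x hx hx' h
    rcases Nat.lt_or_ge (x 2).natAbs (n+1) with hlt | hge
    · exact ih x hx hx' (by omega)
    have habs : (x 2).natAbs = n + 1 := le_antisymm h hge
    have b0 := cube_bounds hx 0
    have b1 := cube_bounds hx 1
    have b2 := cube_bounds hx 2
    have c0 := cube_bounds hx' 0
    have c1 := cube_bounds hx' 1
    have c2 := cube_bounds hx' 2
    simp [unitVec] at c0 c1 c2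
    rcases lt_or_ge 0 (x 2) with hpos | hneg
    · set y : Pt := fun i => if i = 2 then x i - 1 else x i with hy
      have hye : y + unitVec 2 = x := by
        funext i; fin_cases i <;> simp [hy, unitVec]
      have hye0 : y + unitVec 0 + unitVec 2 = x + unitVec 0 := by
        funext i; fin_cases i <;> simp [hy, unitVec]
      have hcy : inCube L y := by
        apply cube_of_bounds; intro i; fin_cases i <;> simp [hy] <;> omega
      have hcy0 : inCube L (y + unitVec 0) := by
        apply cube_of_bounds; intro i; fin_cases i <;> simp [hy, unitVec] <;> omega
      have hplaq := hdA y 0 2 (by decide) hcy hcy0 (hye ▸ hx) (hye0 ▸ hx')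
      rw [plaq, hye, hye0] at hplaq
      have t1 : A y (y + unitVec 0) = 0 := ih y hcy hcy0 (by simp [hy]; omega)
      have t2 : A y (y + unitVec 2) = 0 := bond2 hA htau y hcy (hye ▸ hx)
      rw [hye] at t2
      have t3 : A x y = 0 := by rw [hA]; linarith
      have t4 : A (x + unitVec 0) x = - A x (x + unitVec 0) := by rw [hA]
      have t5 : A (y + unitVec 0) (y + unitVec 0 + unitVec 2) = 0 :=
        bond2 hA htau (y + unitVec 0) hcy0 (hye0 ▸ hx')
      rw [hye0] at t5
      linarith
    · have hneg' : x 2 < 0 := by omega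
      set y : Pt := x + unitVec 2 with hy
      have hye0 : x + unitVec 0 + unitVec 2 = y + unitVec 0 := by
        rw [hy]; ring
      have hcy : inCube L y := by
        apply cube_of_bounds; intro i; fin_cases i <;> simp [hy, unitVec] <;> omega
      have hcy0 : inCube L (y + unitVec 0) := by
        apply cube_of_bounds; intro i; fin_cases i <;> simp [hy, unitVec] <;> omega
      have hplaq := hdA x 0 2 (by decide) hx hx' hcy (hye0 ▸ hcy0)
      rw [plaq, hye0] at hplaq
      have t1 : A y (y + unitVec 0) = 0 := by
        apply ih y hcy hcy0; simp [hy, unitVec]; omega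
      have t2 : A x y = 0 := bond2 hA htau x hx hcy
      have t3 : A (x + unitVec 0) (y + unitVec 0) = 0 := by
        rw [← hye0]; exact bond2 hA htau (x + unitVec 0) hx' (hye0 ▸ hcy0)
      have t4 : A (y + unitVec 0) y = - A y (y + unitVec 0) := by rw [hA]
      have t5 : A y x = - A x y := by rw [hA]
      linarith

end main


/-- If a gauge field `A` on the cube `B` has vanishing field strength on
every plaquette contained in `B` and `(τ⁰A)(x) = 0` for every `x ∈ B`, then `A` vanishes
on every bond of `B`. -/
theorem tree_axial_gauge_rigidity (L : ℤ) (hL3 : 3 ≤ L) (hLodd : Odd L)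
    (A : Pt → Pt → ℝ) (hA : ∀ x x', A x x' = - A x' x)
    (hdA : ∀ (x : Pt) (μ ν : Fin 3), μ ≠ ν →
      inCube L x → inCube L (x + unitVec μ) → inCube L (x + unitVec ν) →
      inCube L (x + unitVec μ + unitVec ν) → plaq A x μ ν = 0)
    (htau : ∀ x : Pt, inCube L x → tau0 A x = 0) :
    ∀ (x : Pt) (μ : Fin 3), inCube L x → inCube L (x + unitVec μ) →
      A x (x + unitVec μ) = 0 := by
  intro x μ hx hx'
  fin_cases μ
  · exact bond0gen hA hdA htau (x 2).natAbs x hx hx' le_rfl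
  · exact bond1' hA hdA htau x hx hx'
  · exact bond2 hA htau x hx hx'
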